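/- arXiv:1605.01551 — 2 statements merged into one kernel-verified Lean document; each statement's English description precedes it below -/
import Mathlib

section
/- Assume (A3), (A5) and (A7). For every V ∈ (V_W, V_max] such that I₋ < λ₋⁻¹(V) < λ₊⁻¹(V) < I₊, one has V_W⁻² − Φ(V) = Λ₋(λ₋⁻¹(V), λ₊⁻¹(V)) = Λ₊(λ₋⁻¹(V), λ₊⁻¹(V)). -/
open MeasureTheory Set
open scoped ENNReal

noncomputable section

/-- The right limit of `f` at `x`, with the convention `f(b+) := f b` at the
right endpoint `b`. -/
def rLim (b : ℝ) (f : ℝ → ℝ) (x : ℝ) : ℝ :=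
  if x < b then Function.rightLim f x else f b

/-- `ν` is the Lebesgue-Stieltjes signed measure `df` of `f` on the interval `[a,b]`,
with the conventions `f(a−) := f a` and `f(b+) := f b`. -/
def IsLS (a b : ℝ) (f : ℝ → ℝ) (ν : MeasureTheory.SignedMeasure ℝ) : Prop :=
  (∀ s : Set ℝ, MeasurableSet s → s ∩ Set.Icc a b = ∅ → ν s = 0) ∧
  (∀ x y : ℝ, a ≤ x → x ≤ y → y ≤ b → ν (Set.Ioc x y) = rLim b f y - rLim b f x) ∧
  ν {a} = rLim b f a - f a

/-- The integral `∫_s g dν` of `g` over `s` against the signed measure `ν`. -/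
def sInt (ν : MeasureTheory.SignedMeasure ℝ) (g : ℝ → ℝ) (s : Set ℝ) : ℝ :=
  (∫ x in s, g x ∂ν.toJordanDecomposition.posPart) -
    ∫ x in s, g x ∂ν.toJordanDecomposition.negPart

/-- Assumption (A3): `lm` (demand) is continuous and nonincreasing, `lp` (supply) is
continuous and nondecreasing on `[a,b]`; both are nonnegative. -/
def A3 (a b : ℝ) (lm lp : ℝ → ℝ) : Prop :=
  ContinuousOn lm (Set.Icc a b) ∧ ContinuousOn lp (Set.Icc a b) ∧
  AntitoneOn lm (Set.Icc a b) ∧ MonotoneOn lp (Set.Icc a b) ∧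
  (∀ x ∈ Set.Icc a b, 0 ≤ lm x) ∧ (∀ x ∈ Set.Icc a b, 0 ≤ lp x)

/-- Assumption (A6): the rates of market orders are positive. -/
def A6 (a b : ℝ) (lm lp : ℝ → ℝ) : Prop := 0 < lp a ∧ 0 < lm b

/-- Assumption (A5): `lm` and `lp` are positive on the open interval `(a,b)`. -/
def A5 (a b : ℝ) (lm lp : ℝ → ℝ) : Prop := ∀ x ∈ Set.Ioo a b, 0 < lm x ∧ 0 < lp x

/-- The Walrasian volume of trade `V_W`. -/
def VWal (a b : ℝ) (lm lp : ℝ → ℝ) : ℝ :=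
  sSup ((fun x => min (lm x) (lp x)) '' Set.Icc a b)

/-- The maximal volume of trade `V_max`. -/
def Vmax (a b : ℝ) (lm lp : ℝ → ℝ) : ℝ := min (lm a) (lp b)

/-- The left-continuous inverse `λ₋⁻¹(V) = sup {x ∈ [a,b] : lm x ≥ V}`. -/
def linvm (a b : ℝ) (lm : ℝ → ℝ) (V : ℝ) : ℝ := sSup {x | x ∈ Set.Icc a b ∧ V ≤ lm x}

/-- The left-continuous inverse `λ₊⁻¹(V) = inf {x ∈ [a,b] : lp x ≥ V}`. -/
def linvp (a b : ℝ) (lp : ℝ → ℝ) (V : ℝ) : ℝ := sInf {x | x ∈ Set.Icc a b ∧ V ≤ lp x}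

/-- The function `Φ(V) = ∫_{V_W}^V (1/λ₊(λ₋⁻¹(W)) + 1/λ₋(λ₊⁻¹(W))) W⁻² dW`,
with values in `[0,∞]`. -/
def Phi (a b : ℝ) (lm lp : ℝ → ℝ) (V : ℝ) : ℝ≥0∞ :=
  ∫⁻ W in Set.Ioc (VWal a b lm lp) V,
    ENNReal.ofReal (((lp (linvm a b lm W))⁻¹ + (lm (linvp a b lp W))⁻¹) * (W ^ 2)⁻¹)

/-- Luckock's volume of trade `V_L`. -/
def VLuc (a b : ℝ) (lm lp : ℝ → ℝ) : ℝ :=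
  sSup {V | V ∈ Set.Icc (VWal a b lm lp) (Vmax a b lm lp) ∧
    Phi a b lm lp V ≤ ENNReal.ofReal (((VWal a b lm lp) ^ 2)⁻¹)}


section LuckockHelpers
open Filter
open scoped Topology

lemma ftc_invsq {s t : ℝ} (hs : 0 < s) (hst : s ≤ t) :
    ∫⁻ W in Set.Ioc s t, ENNReal.ofReal ((W ^ 2)⁻¹) = ENNReal.ofReal (s⁻¹ - t⁻¹) := by
  have hsub : Set.uIcc s t = Set.Icc s t := Set.uIcc_of_le hst
  have hcont : ContinuousOn (fun W : ℝ => (W ^ 2)⁻¹) (Set.uIcc s t) := by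
    rw [hsub]
    apply ContinuousOn.inv₀ (by fun_prop)
    intro x hx
    have : 0 < x := lt_of_lt_of_le hs hx.1
    positivity
  have hint : IntervalIntegrable (fun W : ℝ => (W ^ 2)⁻¹) volume s t :=
    hcont.intervalIntegrable
  have h0 : (0:ℝ) ∉ Set.uIcc s t := by
    rw [hsub]; intro h; exact absurd h.1 (by linarith)
  have h1 : (∫ W in s..t, (W ^ 2)⁻¹) = s⁻¹ - t⁻¹ := by
    have h2 : ∀ W : ℝ, (W ^ 2)⁻¹ = W ^ (-2 : ℤ) := by
      intro W; rw [zpow_neg]; norm_cast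
    calc (∫ W in s..t, (W ^ 2)⁻¹) = ∫ W in s..t, W ^ (-2 : ℤ) := by
          apply intervalIntegral.integral_congr; intro W _; exact h2 W
      _ = (t ^ (-2 + 1 : ℤ) - s ^ (-2 + 1 : ℤ)) / ((-2 : ℤ) + 1) := by
          rw [integral_zpow (Or.inr ⟨by norm_num, h0⟩)]
      _ = s⁻¹ - t⁻¹ := by norm_num; ring
  have h3 : (∫ W in Set.Ioc s t, (W ^ 2)⁻¹) = s⁻¹ - t⁻¹ := by
    rw [← intervalIntegral.integral_of_le hst]; exact h1
  rw [← h3, ← MeasureTheory.ofReal_integral_eq_lintegral_ofReal]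
  · exact (intervalIntegrable_iff_integrableOn_Ioc_of_le hst).1 hint
  · filter_upwards with x; positivity

lemma atomzero {a b y : ℝ} (hay : a < y) (hyb : y < b) (h : ℝ → ℝ)
    (hc : ContinuousWithinAt h (Set.Ioo a b) y) (μ : Measure ℝ)
    (hμ : ∀ x y' : ℝ, a < x → x ≤ y' → y' < b → μ (Set.Ioc x y') = ENNReal.ofReal (h y' - h x)) :
    μ {y} = 0 := by
  refine le_antisymm ?_ zero_le
  refine ENNReal.le_of_forall_pos_le_add fun ε hε _ => ?_
  rw [zero_add]
  have hne : (𝓝[Set.Ioo a y] y).NeBot := by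
    apply mem_closure_iff_nhdsWithin_neBot.1
    rw [closure_Ioo (ne_of_lt hay)]
    exact ⟨le_of_lt hay, le_refl y⟩
  have hev : ∀ᶠ x in 𝓝[Set.Ioo a y] y, |h x - h y| < ε := by
    have h1 : ∀ᶠ x in 𝓝[Set.Ioo a b] y, |h x - h y| < ε := by
      have := hc (Metric.ball_mem_nhds (h y) (by exact_mod_cast hε))
      filter_upwards [this] with x hx
      simpa [Real.dist_eq] using hx
    exact h1.filter_mono (nhdsWithin_mono y (Set.Ioo_subset_Ioo_right hyb.le))
  have hev2 : ∀ᶠ x in 𝓝[Set.Ioo a y] y, x ∈ Set.Ioo a y := self_mem_nhdsWithin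
  obtain ⟨x, hx1, hx2⟩ := (hev.and hev2).exists
  have key : μ {y} ≤ μ (Set.Ioc x y) := measure_mono (by
    intro z hz; simp at hz; subst hz; exact ⟨hx2.2, le_refl _⟩)
  rw [hμ x y (hx2.1) (le_of_lt hx2.2) hyb] at key
  refine le_trans key ?_
  rw [abs_lt] at hx1
  calc ENNReal.ofReal (h y - h x) ≤ ENNReal.ofReal ε := by
        apply ENNReal.ofReal_le_ofReal; linarith [hx1.1]
    _ = (ε : ℝ≥0∞) := ENNReal.ofReal_coe_nnreal

lemma Ico_Ioc_measure {μ : MeasureTheory.Measure ℝ} {p q : ℝ} (hp : μ {p} = 0) (hq : μ {q} = 0) :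
    μ (Set.Ico p q) = μ (Set.Ioc p q) := by
  rcases lt_or_ge p q with h | h
  · rw [← Set.Ioo_union_left h, ← Set.Ioo_union_right h,
      MeasureTheory.measure_union (by simp) (measurableSet_singleton p),
      MeasureTheory.measure_union (by simp) (measurableSet_singleton q), hp, hq]
  · rw [Set.Ico_eq_empty (not_lt.2 h), Set.Ioc_eq_empty (not_lt.2 h)]

lemma cov {a b c d : ℝ} (f g : ℝ → ℝ) (μ : Measure ℝ)
    (hac : a < c) (hcd : c < d) (hdb : d < b)
    (hfc : Continuous f) (hfm : Monotone f)
    (hgm : MonotoneOn g (Set.Icc a d)) (hg0 : ∀ x ∈ Set.Icc a d, 0 ≤ g x)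
    (hfcpos : 0 < f c) (hfcd : f c < f d)
    (hμ : ∀ x y : ℝ, a < x → x ≤ y → y < b →
      μ (Set.Ioc x y) = ENNReal.ofReal ((f x)⁻¹ - (f y)⁻¹))
    (hd : sInf {x | x ∈ Set.Icc a b ∧ f d ≤ f x} = d) :
    ∫⁻ W in Set.Ioc (f c) (f d),
        ENNReal.ofReal (g (sInf {x | x ∈ Set.Icc a b ∧ W ≤ f x}) * (W ^ 2)⁻¹) =
      ∫⁻ x in Set.Ioc c d, ENNReal.ofReal (g x) ∂μ := by
  have hab : a < b := lt_trans hac (lt_trans hcd hdb)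
  have hfmeas : Measurable f := hfc.measurable
  set u := f c with hu
  set v := f d with hv
  have huv : 0 < v := lt_trans hfcpos hfcd
  -- the generalized inverse
  set S : ℝ → Set ℝ := fun W => {x | x ∈ Set.Icc a b ∧ W ≤ f x} with hS
  set i : ℝ → ℝ := fun W => sInf (S W) with hi
  have hSne : ∀ W, W ≤ v → (S W).Nonempty := fun W hW =>
    ⟨d, ⟨le_of_lt (lt_trans hac hcd), le_of_lt hdb⟩, hW⟩
  have hSbdd : ∀ W, BddBelow (S W) := fun W => ⟨a, fun x hx => hx.1.1⟩
  have hSclosed : ∀ W, IsClosed (S W) := by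
    intro W
    have : S W = Set.Icc a b ∩ f ⁻¹' (Set.Ici W) := by
      ext x; simp [hS, Set.mem_Ici, and_comm]
    rw [this]
    exact isClosed_Icc.inter (isClosed_Ici.preimage hfc)
  have hSmem : ∀ W, W ≤ v → i W ∈ S W := fun W hW =>
    (hSclosed W).csInf_mem (hSne W hW) (hSbdd W)
  have hi_le_d : ∀ W, W ≤ v → i W ≤ d := fun W hW =>
    csInf_le (hSbdd W) ⟨⟨le_of_lt (lt_trans hac hcd), le_of_lt hdb⟩, hW⟩
  have hi_ge_a : ∀ W, W ≤ v → a ≤ i W := fun W hW =>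
    le_csInf (hSne W hW) (fun x hx => hx.1.1)
  -- the measurable version of the integrand on the W side
  set G : ℝ → ℝ≥0∞ := fun W => ENNReal.ofReal (g (i (min W v))) with hG
  have hGmeas : Measurable G := by
    have h1 : Monotone (fun W => i (min W v)) := by
      intro W1 W2 h12
      exact csInf_le_csInf (hSbdd _) (hSne _ (min_le_right _ _))
        (fun x hx => ⟨hx.1, le_trans (min_le_min (le_refl _) (le_refl v) |>.trans (le_refl _)) (le_trans (min_le_min h12 (le_refl v)) hx.2)⟩)
    have h2 : Monotone (fun W => g (i (min W v))) := by
      intro W1 W2 h12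
      exact hgm ⟨hi_ge_a _ (min_le_right _ _), hi_le_d _ (min_le_right _ _)⟩
        ⟨hi_ge_a _ (min_le_right _ _), hi_le_d _ (min_le_right _ _)⟩ (h1 h12)
    exact ENNReal.measurable_ofReal.comp h2.measurable
  -- the level sets of f on (c,d]
  set e : ℝ → ℝ := fun r => if u ≤ r then sSup {x | x ∈ Set.Icc c d ∧ f x ≤ r} else c with he
  have hTclosed : ∀ r : ℝ, IsClosed {x | x ∈ Set.Icc c d ∧ f x ≤ r} := by
    intro r
    have : {x | x ∈ Set.Icc c d ∧ f x ≤ r} = Set.Icc c d ∩ f ⁻¹' (Set.Iic r) := by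
      ext x; simp [Set.mem_Iic]
    rw [this]
    exact isClosed_Icc.inter (isClosed_Iic.preimage hfc)
  have hTbdd : ∀ r : ℝ, BddAbove {x | x ∈ Set.Icc c d ∧ f x ≤ r} :=
    fun r => ⟨d, fun x hx => hx.1.2⟩
  have hTne : ∀ r : ℝ, u ≤ r → {x | x ∈ Set.Icc c d ∧ f x ≤ r}.Nonempty :=
    fun r hr => ⟨c, ⟨le_refl c, le_of_lt hcd⟩, hr⟩
  have heT : ∀ r : ℝ, u ≤ r → e r ∈ {x | x ∈ Set.Icc c d ∧ f x ≤ r} := by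
    intro r hr
    rw [he]; simp only [if_pos hr]
    exact (hTclosed r).csSup_mem (hTne r hr) (hTbdd r)
  have he_ge_c : ∀ r, c ≤ e r := by
    intro r
    by_cases hr : u ≤ r
    · exact (heT r hr).1.1
    · rw [he]; simp [if_neg hr]
  have he_le_d : ∀ r, e r ≤ d := by
    intro r
    by_cases hr : u ≤ r
    · exact (heT r hr).1.2
    · rw [he]; simp [if_neg hr]; exact le_of_lt hcd
  have hset : ∀ r : ℝ, {x | x ∈ Set.Ioc c d ∧ f x ≤ r} = Set.Ioc c (e r) := by
    intro r
    by_cases hr : u ≤ r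
    · ext x
      constructor
      · rintro ⟨hx1, hx2⟩
        exact ⟨hx1.1, le_csSup (hTbdd r) ⟨⟨le_of_lt hx1.1, hx1.2⟩, hx2⟩ |>.trans_eq
          (by rw [he]; simp [if_pos hr])⟩
      · rintro ⟨hx1, hx2⟩
        have hed := heT r hr
        refine ⟨⟨hx1, le_trans hx2 hed.1.2⟩, le_trans (hfm (le_trans hx2 (le_refl _))) hed.2⟩
    · have h1 : e r = c := by rw [he]; simp [if_neg hr]
      rw [h1]
      ext x
      simp only [Set.mem_Ioc, Set.mem_setOf_eq]
      constructor
      · rintro ⟨⟨hcx, hxd⟩, hfx⟩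
        exfalso
        push_neg at hr
        exact absurd (le_trans (hfm (le_of_lt hcx)) hfx) (not_le.2 hr)
      · rintro ⟨h1', h2'⟩; exact absurd (lt_of_lt_of_le h1' h2') (lt_irrefl c)
  have hfe : ∀ r : ℝ, f (e r) = max u (min r v) := by
    intro r
    by_cases hr : u ≤ r
    · have hed := heT r hr
      by_cases hrv : v ≤ r
      · have hEd : e r = d := le_antisymm hed.1.2
          (le_csSup (hTbdd r) ⟨⟨le_of_lt hcd, le_refl d⟩, hrv⟩ |>.trans_eq
            (by rw [he]; simp [if_pos hr]))
        rw [hEd, ← hv]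
        rw [min_eq_right hrv, max_eq_right (le_of_lt hfcd)]
      · push_neg at hrv
        have hfE : f (e r) = r := by
          refine le_antisymm hed.2 ?_
          by_contra hlt
          push_neg at hlt
          have hEd : e r < d := by
            rcases lt_or_eq_of_le hed.1.2 with h | h
            · exact h
            · exfalso; rw [h] at hlt; exact absurd hlt (not_lt.2 (le_of_lt hrv))
          have hne : (𝓝[Set.Ioo (e r) d] (e r)).NeBot := by
            apply mem_closure_iff_nhdsWithin_neBot.1
            rw [closure_Ioo (ne_of_lt hEd)]
            exact ⟨le_refl _, le_of_lt hEd⟩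
          have hev : ∀ᶠ x in 𝓝[Set.Ioo (e r) d] (e r), f x < r := by
            apply eventually_nhdsWithin_of_eventually_nhds
            exact (hfc.tendsto (e r)).eventually_lt_const hlt
          haveI := hne
          obtain ⟨x, hx1, hx2⟩ := (hev.and self_mem_nhdsWithin).exists
          have : x ≤ e r := le_csSup (hTbdd r) ⟨⟨le_trans (he_ge_c r) (le_of_lt hx2.1), le_of_lt hx2.2⟩, le_of_lt hx1⟩ |>.trans_eq (by rw [he]; simp [if_pos hr])
          exact absurd hx2.1 (not_lt.2 this)
        rw [hfE, min_eq_left (le_of_lt hrv), max_eq_right hr]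
    · push_neg at hr
      have h1 : e r = c := by rw [he]; simp [if_neg (not_le.2 hr)]
      rw [h1, min_eq_left (le_of_lt (lt_trans hr hfcd)), max_eq_left (le_of_lt hr)]
  -- monotonicity of e
  have he_mono : ∀ p q : ℝ, p ≤ q → e p ≤ e q := by
    intro p q hpq
    by_cases hp : u ≤ p
    · have hq : u ≤ q := le_trans hp hpq
      rw [he]; simp only [if_pos hp, if_pos hq]
      exact csSup_le_csSup (hTbdd q) (hTne p hp) (fun x hx => ⟨hx.1, le_trans hx.2 hpq⟩)
    · have h1 : e p = c := by rw [he]; simp [if_neg hp]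
      rw [h1]; exact he_ge_c q
  -- preimage identity
  have hpre : ∀ p q : ℝ, f ⁻¹' (Set.Ioc p q) ∩ Set.Ioc c d = Set.Ioc (e p) (e q) := by
    intro p q
    ext x
    simp only [Set.mem_inter_iff, Set.mem_preimage, Set.mem_Ioc]
    constructor
    · rintro ⟨⟨hpx, hxq⟩, hcx, hxd⟩
      have h1 : x ∈ Set.Ioc c (e q) := by
        rw [← hset q]; exact ⟨⟨hcx, hxd⟩, hxq⟩
      have h2 : x ∉ Set.Ioc c (e p) := by
        rw [← hset p]; rintro ⟨_, hfx⟩; linarith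
      refine ⟨?_, h1.2⟩
      by_contra hh
      push_neg at hh
      exact h2 ⟨hcx, hh⟩
    · rintro ⟨hepx, hxeq⟩
      have hcx : c < x := lt_of_le_of_lt (he_ge_c p) hepx
      have h1 : x ∈ {x | x ∈ Set.Ioc c d ∧ f x ≤ q} := by rw [hset q]; exact ⟨hcx, hxeq⟩
      have h2 : x ∉ {x | x ∈ Set.Ioc c d ∧ f x ≤ p} := by
        rw [hset p]; rintro ⟨_, hxep⟩; exact absurd hepx (not_lt.2 hxep)
      refine ⟨⟨?_, h1.2⟩, h1.1⟩
      by_contra hh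
      push_neg at hh
      exact h2 ⟨h1.1, hh⟩
  -- the image measure
  have hμcd : μ (Set.Ioc c d) = ENNReal.ofReal (u⁻¹ - v⁻¹) := hμ c d hac (le_of_lt hcd) hdb
  haveI hfin1 : IsFiniteMeasure (Measure.map f (μ.restrict (Set.Ioc c d))) := by
    constructor
    rw [Measure.map_apply hfmeas MeasurableSet.univ, Set.preimage_univ,
      Measure.restrict_apply MeasurableSet.univ, Set.univ_inter, hμcd]
    exact ENNReal.ofReal_lt_top
  set ρ : Measure ℝ := (volume.restrict (Set.Ioc u v)).withDensity
      (fun W => ENNReal.ofReal ((W ^ 2)⁻¹)) with hρ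
  have hdens : Measurable fun W : ℝ => ENNReal.ofReal ((W ^ 2)⁻¹) := by fun_prop
  have hρIoc : ∀ p q : ℝ, ρ (Set.Ioc p q)
      = ∫⁻ W in Set.Ioc (max p u) (min q v), ENNReal.ofReal ((W ^ 2)⁻¹) := by
    intro p q
    rw [hρ, withDensity_apply _ measurableSet_Ioc,
      Measure.restrict_restrict measurableSet_Ioc, Set.Ioc_inter_Ioc]
  have hφ : ∀ p q : ℝ, ENNReal.ofReal ((f (e p))⁻¹ - (f (e q))⁻¹) = ρ (Set.Ioc p q) := by
    intro p q
    rw [hρIoc, hfe p, hfe q]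
    rcases le_or_gt (min q v) (max p u) with h | h
    · rw [Set.Ioc_eq_empty (not_lt.2 h), setLIntegral_empty]
      have hmq : max u (min q v) ≤ max u (min p v) := by
        rcases le_or_gt p v with hpv | hpv
        · rw [min_eq_left hpv]
          exact sup_le le_sup_left (le_trans h (le_of_eq (max_comm p u)))
        · rw [min_eq_right (le_of_lt hpv)]
          exact max_le_max (le_refl u) (min_le_right q v)
      have hpos : 0 < max u (min q v) := lt_of_lt_of_le hfcpos (le_max_left _ _)
      have hpos2 : 0 < max u (min p v) := lt_of_lt_of_le hfcpos (le_max_left _ _)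
      rw [ENNReal.ofReal_eq_zero]
      have := one_div_le_one_div_of_le hpos (by exact hmq)
      simp only [one_div] at this
      linarith
    · have hs : 0 < max p u := lt_of_lt_of_le hfcpos (le_max_right _ _)
      rw [ftc_invsq hs (le_of_lt h)]
      congr 1
      have h1 : max u (min p v) = max p u := by
        have hpv : p < v := lt_of_le_of_lt (le_max_left p u) (lt_of_lt_of_le h (min_le_right q v))
        rw [min_eq_left (le_of_lt hpv), max_comm]
      have h2 : max u (min q v) = min q v := by
        refine max_eq_right ?_
        exact le_of_lt (lt_of_le_of_lt (le_max_right p u) h)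
      rw [h1, h2]
  have hmap : Measure.map f (μ.restrict (Set.Ioc c d)) = ρ := by
    refine ext_of_generate_finite {S : Set ℝ | ∃ l u', l < u' ∧ Set.Ioc l u' = S}
      ?_ ?_ ?_ ?_
    · exact (BorelSpace.measurable_eq (α := ℝ)).trans (borel_eq_generateFrom_Ioc ℝ)
    · simpa using isPiSystem_Ioc (id : ℝ → ℝ) id
    · rintro s ⟨p, q, hpq, rfl⟩
      rw [Measure.map_apply hfmeas measurableSet_Ioc,
        Measure.restrict_apply (hfmeas measurableSet_Ioc), hpre,
        hμ (e p) (e q) (lt_of_lt_of_le hac (he_ge_c p)) (he_mono p q (le_of_lt hpq))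
          (lt_of_le_of_lt (he_le_d q) hdb), hφ]
    · rw [Measure.map_apply hfmeas MeasurableSet.univ, Set.preimage_univ,
        Measure.restrict_apply MeasurableSet.univ, Set.univ_inter, hμcd, hρ,
        withDensity_apply _ MeasurableSet.univ,
        Measure.restrict_restrict MeasurableSet.univ, Set.univ_inter,
        ftc_invsq hfcpos (le_of_lt hfcd)]
  -- the exceptional set for the a.e. identification
  set E : ℚ → ℝ := fun q => sSup {x | x ∈ Set.Icc a b ∧ f x ≤ f q} with hE
  set D : ℚ → Set ℝ := fun q =>
    if c < (q : ℝ) ∧ (q : ℝ) < d ∧ f q < v then Set.Ioc (q : ℝ) (E q) else ∅ with hD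
  have hDnull : ∀ q : ℚ, μ (D q) = 0 := by
    intro q
    simp only [hD]
    split_ifs with hcond
    · obtain ⟨hq1, hq2, hq3⟩ := hcond
      have hqI : (q : ℝ) ∈ Set.Icc a b :=
        ⟨le_of_lt (lt_trans hac hq1), le_of_lt (lt_trans hq2 hdb)⟩
      have hTc : IsClosed {x | x ∈ Set.Icc a b ∧ f x ≤ f q} := by
        have : {x | x ∈ Set.Icc a b ∧ f x ≤ f q} = Set.Icc a b ∩ f ⁻¹' (Set.Iic (f q)) := by
          ext x; simp [Set.mem_Iic]
        rw [this]
        exact isClosed_Icc.inter (isClosed_Iic.preimage hfc)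
      have hTb : BddAbove {x | x ∈ Set.Icc a b ∧ f x ≤ f q} := ⟨b, fun x hx => hx.1.2⟩
      have hTn : {x | x ∈ Set.Icc a b ∧ f x ≤ f q}.Nonempty := ⟨(q:ℝ), hqI, le_refl _⟩
      have hEq_mem : E q ∈ {x | x ∈ Set.Icc a b ∧ f x ≤ f q} := hTc.csSup_mem hTn hTb
      have hqEq : (q : ℝ) ≤ E q := le_csSup hTb ⟨hqI, le_refl _⟩
      have hfEq : f (E q) = f q := le_antisymm hEq_mem.2 (hfm hqEq)
      have hEqb : E q < b := by
        rcases lt_or_eq_of_le hEq_mem.1.2 with h | h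
        · exact h
        · exfalso
          have : v ≤ f q := by rw [← hfEq, h]; exact hfm (le_of_lt hdb)
          exact absurd hq3 (not_lt.2 this)
      rw [hμ (q : ℝ) (E q) (lt_trans hac hq1) hqEq hEqb, hfEq]
      simp
    · simp
  have hM : μ (⋃ q : ℚ, D q) = 0 := measure_iUnion_null hDnull
  -- the main computation
  calc ∫⁻ W in Set.Ioc u v,
        ENNReal.ofReal (g (sInf {x | x ∈ Set.Icc a b ∧ W ≤ f x}) * (W ^ 2)⁻¹)
      = ∫⁻ W in Set.Ioc u v, ((fun W => ENNReal.ofReal ((W ^ 2)⁻¹)) * G) W := by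
        refine setLIntegral_congr_fun measurableSet_Ioc ?_
        intro W hW
        beta_reduce
        have h1 : min W v = W := min_eq_left hW.2
        show ENNReal.ofReal (g (i W) * (W ^ 2)⁻¹)
          = ENNReal.ofReal ((W ^ 2)⁻¹) * G W
        simp only [hG, Pi.mul_apply, h1]
        rw [mul_comm (g (i W)) _, ENNReal.ofReal_mul (by positivity)]
    _ = ∫⁻ W, G W ∂ρ := by
        rw [hρ, lintegral_withDensity_eq_lintegral_mul _ hdens hGmeas]
    _ = ∫⁻ W, G W ∂(Measure.map f (μ.restrict (Set.Ioc c d))) := by rw [hmap]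
    _ = ∫⁻ x, G (f x) ∂(μ.restrict (Set.Ioc c d)) := lintegral_map hGmeas hfmeas
    _ = ∫⁻ x in Set.Ioc c d, ENNReal.ofReal (g x) ∂μ := by
        refine lintegral_congr_ae ((ae_restrict_iff' measurableSet_Ioc).2 ?_)
        refine ae_iff.2 (measure_mono_null ?_ hM)
        intro x hx
        simp only [Set.mem_setOf_eq, Classical.not_imp] at hx
        obtain ⟨hxcd, hne⟩ := hx
        have hfxv : f x ≤ v := hfm hxcd.2
        have hzx : i (f x) ≠ x := by
          intro hiz
          apply hne
          simp only [hG, min_eq_left hfxv, hiz]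
        have hz_le : i (f x) ≤ x := csInf_le (hSbdd _)
          ⟨⟨le_of_lt (lt_trans hac hxcd.1), le_trans hxcd.2 (le_of_lt hdb)⟩, le_refl _⟩
        have hzlt : i (f x) < x := lt_of_le_of_ne hz_le hzx
        have hzS := hSmem (f x) hfxv
        have hfzx : f (i (f x)) = f x := le_antisymm (hfm hz_le) hzS.2
        have hfxlt : f x < v := by
          rcases lt_or_eq_of_le hfxv with h | h
          · exact h
          · exfalso
            have : i (f x) = d := by rw [h]; exact hd
            rw [this] at hzlt
            exact absurd hxcd.2 (not_le.2 hzlt)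
        obtain ⟨q, hq1, hq2⟩ := exists_rat_btwn (max_lt hzlt hxcd.1)
        have hzq : i (f x) ≤ (q : ℝ) := le_of_lt (lt_of_le_of_lt (le_max_left _ _) hq1)
        have hcq : c < (q : ℝ) := lt_of_le_of_lt (le_max_right _ _) hq1
        have hfq : f q = f x := le_antisymm (hfm (le_of_lt hq2))
          (by rw [← hfzx]; exact hfm hzq)
        refine Set.mem_iUnion.2 ⟨q, ?_⟩
        simp only [hD]
        have hcond : c < (q : ℝ) ∧ (q : ℝ) < d ∧ f q < v :=
          ⟨hcq, lt_of_lt_of_le hq2 hxcd.2, by rw [hfq]; exact hfxlt⟩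
        simp only [if_pos hcond]
        refine ⟨hq2, ?_⟩
        simp only [hE]
        exact le_csSup ⟨b, fun y hy => hy.1.2⟩
          ⟨⟨le_of_lt (lt_trans hac hxcd.1), le_trans hxcd.2 (le_of_lt hdb)⟩, le_of_eq hfq.symm⟩

lemma ibp {a b s t : ℝ} (F G : ℝ → ℝ) (μ ν : Measure ℝ)
    (has : a < s) (hst : s < t) (htb : t < b)
    (hμ : ∀ x y : ℝ, a < x → x ≤ y → y < b →
      μ (Set.Ioc x y) = ENNReal.ofReal ((F y)⁻¹ - (F x)⁻¹))
    (hν : ∀ x y : ℝ, a < x → x ≤ y → y < b →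
      ν (Set.Ioc x y) = ENNReal.ofReal ((G x)⁻¹ - (G y)⁻¹))
    (hFmono : AntitoneOn F (Set.Icc s t)) (hGmono : MonotoneOn G (Set.Icc s t))
    (hFt : 0 < F t) (hGs : 0 < G s)
    (hatom : ∀ y ∈ Set.Ioc s t, μ {y} = 0) :
    (∫⁻ x in Set.Ioc s t, ENNReal.ofReal ((G x)⁻¹) ∂μ) ≠ ⊤ ∧
    (∫⁻ x in Set.Ioc s t, ENNReal.ofReal ((F x)⁻¹) ∂ν) ≠ ⊤ ∧
    (∫⁻ x in Set.Ioc s t, ENNReal.ofReal ((G x)⁻¹) ∂μ).toReal =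
      (∫⁻ x in Set.Ioc s t, ENNReal.ofReal ((F x)⁻¹) ∂ν).toReal
        + (F t)⁻¹ * (G t)⁻¹ - (F s)⁻¹ * (G s)⁻¹ := by
  have hsI : s ∈ Set.Icc s t := ⟨le_refl s, le_of_lt hst⟩
  have htI : t ∈ Set.Icc s t := ⟨le_of_lt hst, le_refl t⟩
  have hFpos : ∀ x ∈ Set.Icc s t, 0 < F x :=
    fun x hx => lt_of_lt_of_le hFt (hFmono hx htI hx.2)
  have hGpos : ∀ x ∈ Set.Icc s t, 0 < G x :=
    fun x hx => lt_of_lt_of_le hGs (hGmono hsI hx hx.1)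
  have hμst : μ (Set.Ioc s t) = ENNReal.ofReal ((F t)⁻¹ - (F s)⁻¹) :=
    hμ s t has (le_of_lt hst) htb
  have hνst : ν (Set.Ioc s t) = ENNReal.ofReal ((G s)⁻¹ - (G t)⁻¹) :=
    hν s t has (le_of_lt hst) htb
  have hμfin : μ (Set.Ioc s t) ≠ ⊤ := by rw [hμst]; exact ENNReal.ofReal_ne_top
  have hνfin : ν (Set.Ioc s t) ≠ ⊤ := by rw [hνst]; exact ENNReal.ofReal_ne_top
  haveI : IsFiniteMeasure (μ.restrict (Set.Ioc s t)) := by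
    constructor
    rw [Measure.restrict_apply MeasurableSet.univ, Set.univ_inter]
    exact lt_top_iff_ne_top.2 hμfin
  haveI : IsFiniteMeasure (ν.restrict (Set.Ioc s t)) := by
    constructor
    rw [Measure.restrict_apply MeasurableSet.univ, Set.univ_inter]
    exact lt_top_iff_ne_top.2 hνfin
  -- measurable a.e. versions
  have hclamp : Monotone fun x : ℝ => max s (min x t) :=
    fun x y hxy => max_le_max (le_refl s) (min_le_min hxy (le_refl t))
  have hclampI : ∀ x : ℝ, max s (min x t) ∈ Set.Icc s t :=
    fun x => ⟨le_max_left _ _, max_le (le_of_lt hst) (min_le_right _ _)⟩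
  have hKg : AEMeasurable (fun x => ENNReal.ofReal ((G x)⁻¹)) (μ.restrict (Set.Ioc s t)) := by
    refine AEMeasurable.congr (f := fun x => ENNReal.ofReal ((G (max s (min x t)))⁻¹)) ?_ ?_
    · have hmono : Monotone fun x : ℝ => G (max s (min x t)) :=
        fun x y hxy => hGmono (hclampI x) (hclampI y) (hclamp hxy)
      exact (ENNReal.measurable_ofReal.comp hmono.measurable.inv).aemeasurable
    · refine (ae_restrict_iff' measurableSet_Ioc).2 (Filter.Eventually.of_forall ?_)
      intro x hx
      simp only [min_eq_left hx.2, max_eq_right (le_of_lt hx.1)]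
  have hKf : AEMeasurable (fun x => ENNReal.ofReal ((F x)⁻¹)) (ν.restrict (Set.Ioc s t)) := by
    refine AEMeasurable.congr (f := fun x => ENNReal.ofReal ((F (max s (min x t)))⁻¹)) ?_ ?_
    · have hmono : Antitone fun x : ℝ => F (max s (min x t)) :=
        fun x y hxy => hFmono (hclampI x) (hclampI y) (hclamp hxy)
      exact (ENNReal.measurable_ofReal.comp hmono.measurable.inv).aemeasurable
    · refine (ae_restrict_iff' measurableSet_Ioc).2 (Filter.Eventually.of_forall ?_)
      intro x hx
      simp only [min_eq_left hx.2, max_eq_right (le_of_lt hx.1)]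
  set P := ∫⁻ x in Set.Ioc s t, ENNReal.ofReal ((G x)⁻¹) ∂μ with hP
  set Q := ∫⁻ x in Set.Ioc s t, ENNReal.ofReal ((F x)⁻¹) ∂ν with hQ
  have hmeasΔ : MeasurableSet {p : ℝ × ℝ | p.2 ≤ p.1} :=
    measurableSet_le measurable_snd measurable_fst
  set Δ₁ := ((μ.restrict (Set.Ioc s t)).prod (ν.restrict (Set.Ioc s t)))
    {p : ℝ × ℝ | p.2 ≤ p.1} with hΔ₁def
  set Δ₂ := ((μ.restrict (Set.Ioc s t)).prod (ν.restrict (Set.Ioc s t)))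
    {p : ℝ × ℝ | p.2 ≤ p.1}ᶜ with hΔ₂def
  -- compute Δ₁
  have hΔ₁ : Δ₁ = ∫⁻ x in Set.Ioc s t, ENNReal.ofReal ((G s)⁻¹ - (G x)⁻¹) ∂μ := by
    rw [hΔ₁def, Measure.prod_apply hmeasΔ]
    refine setLIntegral_congr_fun measurableSet_Ioc ?_
    intro x hx
    beta_reduce
    have h1 : Prod.mk x ⁻¹' {p : ℝ × ℝ | p.2 ≤ p.1} = Set.Iic x := by
      ext y; simp [Set.mem_Iic]
    rw [h1, Measure.restrict_apply measurableSet_Iic]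
    have h2 : Set.Iic x ∩ Set.Ioc s t = Set.Ioc s x := by
      ext y
      simp only [Set.mem_inter_iff, Set.mem_Iic, Set.mem_Ioc]
      constructor
      · rintro ⟨h3, h4, h5⟩; exact ⟨h4, h3⟩
      · rintro ⟨h3, h4⟩; exact ⟨h4, h3, le_trans h4 hx.2⟩
    rw [h2, hν s x has (le_of_lt hx.1) (lt_of_le_of_lt hx.2 htb)]
  -- compute Δ₂
  have hΔ₂ : Δ₂ = ∫⁻ y in Set.Ioc s t, ENNReal.ofReal ((F y)⁻¹ - (F s)⁻¹) ∂ν := by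
    rw [hΔ₂def, Measure.prod_apply_symm hmeasΔ.compl]
    refine setLIntegral_congr_fun measurableSet_Ioc ?_
    intro y hy
    beta_reduce
    have h1 : (fun x => (x, y)) ⁻¹' {p : ℝ × ℝ | p.2 ≤ p.1}ᶜ = Set.Iio y := by
      ext x; simp [Set.mem_Iio]
    rw [h1, Measure.restrict_apply measurableSet_Iio]
    have h2 : Set.Iio y ∩ Set.Ioc s t = Set.Ioo s y := by
      ext x
      simp only [Set.mem_inter_iff, Set.mem_Iio, Set.mem_Ioc, Set.mem_Ioo]
      constructor
      · rintro ⟨h3, h4, h5⟩; exact ⟨h4, h3⟩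
      · rintro ⟨h3, h4⟩; exact ⟨h4, h3, le_trans (le_of_lt h4) hy.2⟩
    have h3 : Set.Ioo s y = Set.Ioc s y \ {y} := by
      ext x
      simp only [Set.mem_Ioo, Set.mem_diff, Set.mem_Ioc, Set.mem_singleton_iff]
      constructor
      · rintro ⟨h4, h5⟩; exact ⟨⟨h4, le_of_lt h5⟩, ne_of_lt h5⟩
      · rintro ⟨⟨h4, h5⟩, h6⟩; exact ⟨h4, lt_of_le_of_ne h5 h6⟩
    rw [h2, h3, measure_diff (Set.singleton_subset_iff.2 (Set.mem_Ioc.2 ⟨hy.1, le_refl y⟩))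
      (measurableSet_singleton y).nullMeasurableSet (by rw [hatom y hy]; exact ENNReal.zero_ne_top),
      hatom y hy, hμ s y has (le_of_lt hy.1) (lt_of_le_of_lt hy.2 htb), tsub_zero]
  -- identity (i)
  have hi1 : Δ₁ + P = ENNReal.ofReal ((G s)⁻¹) * μ (Set.Ioc s t) := by
    rw [hΔ₁, hP, ← lintegral_add_right' _ hKg]
    have : ∀ x ∈ Set.Ioc s t,
        ENNReal.ofReal ((G s)⁻¹ - (G x)⁻¹) + ENNReal.ofReal ((G x)⁻¹)
          = ENNReal.ofReal ((G s)⁻¹) := by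
      intro x hx
      have hxI : x ∈ Set.Icc s t := ⟨le_of_lt hx.1, hx.2⟩
      have h0 : 0 ≤ (G x)⁻¹ := le_of_lt (inv_pos.2 (hGpos x hxI))
      rw [← ENNReal.ofReal_add (by
        have := hGmono hsI hxI hxI.1
        have h2 : (G x)⁻¹ ≤ (G s)⁻¹ := by
          apply inv_anti₀ hGs this
        linarith) h0]
      congr 1
      ring
    rw [setLIntegral_congr_fun measurableSet_Ioc this,
      setLIntegral_const]
  -- identity (ii)
  have hi2 : Δ₂ + ENNReal.ofReal ((F s)⁻¹) * ν (Set.Ioc s t) = Q := by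
    rw [hΔ₂, hQ, ← setLIntegral_const, ← lintegral_add_right _ measurable_const]
    refine setLIntegral_congr_fun measurableSet_Ioc ?_
    intro x hx
    beta_reduce
    have hxI : x ∈ Set.Icc s t := ⟨le_of_lt hx.1, hx.2⟩
    have h0 : 0 ≤ (F s)⁻¹ := le_of_lt (inv_pos.2 (hFpos s hsI))
    rw [← ENNReal.ofReal_add (by
      have := hFmono hsI hxI hxI.1
      have h2 : (F s)⁻¹ ≤ (F x)⁻¹ := by
        apply inv_anti₀ (hFpos x hxI) this
      linarith) h0]
    congr 1
    ring
  -- identity (iii)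
  have hi3 : Δ₁ + Δ₂ = μ (Set.Ioc s t) * ν (Set.Ioc s t) := by
    rw [hΔ₁def, hΔ₂def, measure_add_measure_compl hmeasΔ, ← Set.univ_prod_univ,
      Measure.prod_prod, Measure.restrict_apply_univ, Measure.restrict_apply_univ]
  -- finiteness
  have hfin1 : Δ₁ + P ≠ ⊤ := by
    rw [hi1]; exact ENNReal.mul_ne_top ENNReal.ofReal_ne_top hμfin
  have hPfin : P ≠ ⊤ := fun h => hfin1 (by rw [h, add_top])
  have hΔ₁fin : Δ₁ ≠ ⊤ := fun h => hfin1 (by rw [h, top_add])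
  have hfin3 : Δ₁ + Δ₂ ≠ ⊤ := by
    rw [hi3]; exact ENNReal.mul_ne_top hμfin hνfin
  have hΔ₂fin : Δ₂ ≠ ⊤ := fun h => hfin3 (by rw [h, add_top])
  have hQfin : Q ≠ ⊤ := by
    rw [← hi2]
    exact ENNReal.add_ne_top.2 ⟨hΔ₂fin, ENNReal.mul_ne_top ENNReal.ofReal_ne_top hνfin⟩
  refine ⟨hPfin, hQfin, ?_⟩
  -- pass to real numbers
  have hm1 : (μ (Set.Ioc s t)).toReal = (F t)⁻¹ - (F s)⁻¹ := by
    rw [hμst, ENNReal.toReal_ofReal]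
    have := hFmono hsI htI (le_of_lt hst)
    have h2 : (F s)⁻¹ ≤ (F t)⁻¹ := inv_anti₀ hFt this
    linarith
  have hm2 : (ν (Set.Ioc s t)).toReal = (G s)⁻¹ - (G t)⁻¹ := by
    rw [hνst, ENNReal.toReal_ofReal]
    have := hGmono hsI htI (le_of_lt hst)
    have h2 : (G t)⁻¹ ≤ (G s)⁻¹ := inv_anti₀ hGs this
    linarith
  have e1 : Δ₁.toReal + P.toReal = (G s)⁻¹ * ((F t)⁻¹ - (F s)⁻¹) := by
    rw [← ENNReal.toReal_add hΔ₁fin hPfin, hi1, ENNReal.toReal_mul, hm1,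
      ENNReal.toReal_ofReal (le_of_lt (inv_pos.2 hGs))]
  have e2 : Δ₂.toReal + (F s)⁻¹ * ((G s)⁻¹ - (G t)⁻¹) = Q.toReal := by
    rw [← hm2, ← ENNReal.toReal_ofReal (le_of_lt (inv_pos.2 (hFpos s hsI))),
      ← ENNReal.toReal_mul, ← ENNReal.toReal_add hΔ₂fin
        (ENNReal.mul_ne_top ENNReal.ofReal_ne_top hνfin), hi2]
  have e3 : Δ₁.toReal + Δ₂.toReal = ((F t)⁻¹ - (F s)⁻¹) * ((G s)⁻¹ - (G t)⁻¹) := by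
    rw [← ENNReal.toReal_add hΔ₁fin hΔ₂fin, hi3, ENNReal.toReal_mul, hm1, hm2]
  linear_combination e1 - e3 + e2

lemma luckock_facts (a b : ℝ) (hab : a < b) (lm lp : ℝ → ℝ)
    (hA3 : A3 a b lm lp) (hA5 : A5 a b lm lp)
    (hA7 : VWal a b lm lp < Vmax a b lm lp)
    (V : ℝ) (hV1 : VWal a b lm lp < V) (hV2 : V ≤ Vmax a b lm lp)
    (Jm Jp : ℝ) (hJm : Jm = linvm a b lm V) (hJp : Jp = linvp a b lp V)
    (haJm : a < Jm) (hJmJp : Jm < Jp) (hJpb : Jp < b) :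
    lm Jm = V ∧ lp Jp = V ∧
    ∃ xs : ℝ, Jm < xs ∧ xs < Jp ∧ lm xs = VWal a b lm lp ∧ lp xs = VWal a b lm lp ∧
      0 < VWal a b lm lp := by
  obtain ⟨hlmc, hlpc, hlma, hlpm, hlm0, hlp0⟩ := hA3
  set VW := VWal a b lm lp with hVWdef
  have hJmI : Jm ∈ Set.Icc a b := ⟨le_of_lt haJm, le_of_lt (lt_trans hJmJp hJpb)⟩
  have hJpI : Jp ∈ Set.Icc a b := ⟨le_of_lt (lt_trans haJm hJmJp), le_of_lt hJpb⟩
  have hVla : V ≤ lm a := le_trans hV2 (min_le_left _ _)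
  have hVlb : V ≤ lp b := le_trans hV2 (min_le_right _ _)
  have himg_bdd : BddAbove ((fun x => min (lm x) (lp x)) '' Set.Icc a b) :=
    isCompact_Icc.bddAbove_image (hlmc.inf hlpc)
  have hmin_le_VW : ∀ x ∈ Set.Icc a b, min (lm x) (lp x) ≤ VW :=
    fun x hx => le_csSup himg_bdd ⟨x, hx, rfl⟩
  -- lm Jm = V
  have hlmJm : lm Jm = V := by
    set S := {x | x ∈ Set.Icc a b ∧ V ≤ lm x} with hSdef
    have hSclosed : IsClosed S := by
      have : S = Set.Icc a b ∩ lm ⁻¹' (Set.Ici V) := by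
        ext x; simp [hSdef, Set.mem_Ici]
      rw [this]
      exact hlmc.preimage_isClosed_of_isClosed isClosed_Icc isClosed_Ici
    have hSne : S.Nonempty := ⟨a, ⟨le_refl a, le_of_lt hab⟩, hVla⟩
    have hSbdd : BddAbove S := ⟨b, fun x hx => hx.1.2⟩
    have hJmS : Jm ∈ S := by rw [hJm]; exact hSclosed.csSup_mem hSne hSbdd
    refine le_antisymm ?_ hJmS.2
    by_contra hlt
    push_neg at hlt
    have hJmb : Jm < b := lt_trans hJmJp hJpb
    have hne : (𝓝[Set.Ioo Jm b] Jm).NeBot := by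
      apply mem_closure_iff_nhdsWithin_neBot.1
      rw [closure_Ioo (ne_of_lt hJmb)]
      exact ⟨le_refl _, le_of_lt hJmb⟩
    have hcw : ContinuousWithinAt lm (Set.Icc a b) Jm := hlmc Jm hJmI
    have hev : ∀ᶠ x in 𝓝[Set.Ioo Jm b] Jm, V < lm x := by
      have h1 : ∀ᶠ x in 𝓝[Set.Icc a b] Jm, V < lm x := hcw.eventually_const_lt hlt
      exact h1.filter_mono (nhdsWithin_mono Jm
        (show Set.Ioo Jm b ⊆ Set.Icc a b from
          fun x hx => ⟨le_trans hJmI.1 (le_of_lt hx.1), le_of_lt hx.2⟩))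
    haveI := hne
    obtain ⟨x, hx1, hx2⟩ := (hev.and self_mem_nhdsWithin).exists
    have : x ≤ Jm := by
      rw [hJm]
      exact le_csSup hSbdd ⟨⟨le_trans hJmI.1 (le_of_lt hx2.1), le_of_lt hx2.2⟩, le_of_lt hx1⟩
    exact absurd hx2.1 (not_lt.2 this)
  -- lp Jp = V
  have hlpJp : lp Jp = V := by
    set S := {x | x ∈ Set.Icc a b ∧ V ≤ lp x} with hSdef
    have hSclosed : IsClosed S := by
      have : S = Set.Icc a b ∩ lp ⁻¹' (Set.Ici V) := by
        ext x; simp [hSdef, Set.mem_Ici]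
      rw [this]
      exact hlpc.preimage_isClosed_of_isClosed isClosed_Icc isClosed_Ici
    have hSne : S.Nonempty := ⟨b, ⟨le_of_lt hab, le_refl b⟩, hVlb⟩
    have hSbdd : BddBelow S := ⟨a, fun x hx => hx.1.1⟩
    have hJpS : Jp ∈ S := by rw [hJp]; exact hSclosed.csInf_mem hSne hSbdd
    refine le_antisymm ?_ hJpS.2
    by_contra hlt
    push_neg at hlt
    have haJp : a < Jp := lt_trans haJm hJmJp
    have hne : (𝓝[Set.Ioo a Jp] Jp).NeBot := by
      apply mem_closure_iff_nhdsWithin_neBot.1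
      rw [closure_Ioo (ne_of_lt haJp)]
      exact ⟨le_of_lt haJp, le_refl _⟩
    have hcw : ContinuousWithinAt lp (Set.Icc a b) Jp := hlpc Jp hJpI
    have hev : ∀ᶠ x in 𝓝[Set.Ioo a Jp] Jp, V < lp x := by
      have h1 : ∀ᶠ x in 𝓝[Set.Icc a b] Jp, V < lp x := hcw.eventually_const_lt hlt
      exact h1.filter_mono (nhdsWithin_mono Jp
        (show Set.Ioo a Jp ⊆ Set.Icc a b from
          fun x hx => ⟨le_of_lt hx.1, le_trans (le_of_lt hx.2) hJpI.2⟩))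
    haveI := hne
    obtain ⟨x, hx1, hx2⟩ := (hev.and self_mem_nhdsWithin).exists
    have : Jp ≤ x := by
      rw [hJp]
      exact csInf_le hSbdd ⟨⟨le_of_lt hx2.1, le_trans (le_of_lt hx2.2) hJpI.2⟩, le_of_lt hx1⟩
    exact absurd hx2.2 (not_lt.2 this)
  refine ⟨hlmJm, hlpJp, ?_⟩
  -- crossing point
  have hlpJmV : lp Jm < V := by
    have h1 := hmin_le_VW Jm hJmI
    rw [hlmJm] at h1
    by_contra hge
    push_neg at hge
    rw [min_eq_left hge] at h1
    exact absurd hV1 (not_lt.2 h1)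
  have hlmJpV : lm Jp < V := by
    have h1 := hmin_le_VW Jp hJpI
    rw [hlpJp] at h1
    by_contra hge
    push_neg at hge
    rw [min_eq_right hge] at h1
    exact absurd hV1 (not_lt.2 h1)
  have hIccsub : Set.Icc Jm Jp ⊆ Set.Icc a b :=
    fun x hx => ⟨le_trans hJmI.1 hx.1, le_trans hx.2 hJpI.2⟩
  have hgc : ContinuousOn (fun x => lp x - lm x) (Set.Icc Jm Jp) :=
    (hlpc.mono hIccsub).sub (hlmc.mono hIccsub)
  have h0mem : (0:ℝ) ∈ Set.Icc (lp Jm - lm Jm) (lp Jp - lm Jp) := by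
    constructor
    · rw [hlmJm]; linarith
    · rw [hlpJp]; linarith
  obtain ⟨xs, hxsI, hgxs⟩ := intermediate_value_Icc (le_of_lt hJmJp) hgc h0mem
  have hlmlp : lm xs = lp xs := by
    have : lp xs - lm xs = 0 := hgxs
    linarith
  have hxsJm : Jm < xs := by
    rcases lt_or_eq_of_le hxsI.1 with h | h
    · exact h
    · exfalso
      rw [← h] at hlmlp
      rw [hlmJm] at hlmlp
      exact absurd hlpJmV (by rw [← hlmlp]; exact lt_irrefl V)
  have hxsJp : xs < Jp := by
    rcases lt_or_eq_of_le hxsI.2 with h | h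
    · exact h
    · exfalso
      rw [h] at hlmlp
      rw [hlpJp] at hlmlp
      exact absurd hlmJpV (by rw [hlmlp]; exact lt_irrefl V)
  have hxsIab : xs ∈ Set.Icc a b := hIccsub hxsI
  have hlmVW : lm xs = VW := by
    refine le_antisymm ?_ ?_
    · have := hmin_le_VW xs hxsIab
      rw [min_eq_left (le_of_eq hlmlp)] at this
      exact this
    · refine csSup_le ⟨min (lm a) (lp a), ⟨a, ⟨le_refl a, le_of_lt hab⟩, rfl⟩⟩ ?_
      rintro y ⟨x, hx, rfl⟩
      rcases le_total x xs with h | h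
      · calc min (lm x) (lp x) ≤ lp x := min_le_right _ _
          _ ≤ lp xs := hlpm hx hxsIab h
          _ = lm xs := hlmlp.symm
      · calc min (lm x) (lp x) ≤ lm x := min_le_left _ _
          _ ≤ lm xs := hlma hxsIab hx h
  have hVWpos : 0 < VW := by
    rw [← hlmVW]
    exact (hA5 xs ⟨lt_trans haJm hxsJm, lt_trans hxsJp hJpb⟩).1
  exact ⟨xs, hxsJm, hxsJp, hlmVW, by rw [← hlmlp]; exact hlmVW, hVWpos⟩


end LuckockHelpers

/-- assume (A3), (A5) and (A7).  For every `V ∈ (V_W, V_max]` with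
`I₋ < λ₋⁻¹(V) < λ₊⁻¹(V) < I₊` one has
`V_W⁻² − Φ(V) = Λ₋(λ₋⁻¹(V), λ₊⁻¹(V)) = Λ₊(λ₋⁻¹(V), λ₊⁻¹(V))`.
Here `μdim` is the (positive) Lebesgue-Stieltjes measure of the nondecreasing function
`1/λ₋` on `(a,b)` and `μdip` that of the nondecreasing function `−1/λ₊`, so that
`Λ₋(J₋,J₊) = 1/(λ₋(J₋)λ₋(J₊)) − ∫_{(J₋,J₊]} (1/λ₊) d(1/λ₋)` and
`Λ₊(J₋,J₊) = 1/(λ₊(J₋)λ₊(J₊)) + ∫_{(J₋,J₊]} (1/λ₋) d(1/λ₊)`. -/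
theorem stmt13 (a b : ℝ) (hab : a < b) (lm lp : ℝ → ℝ)
    (hA3 : A3 a b lm lp) (hA5 : A5 a b lm lp)
    (hA7 : VWal a b lm lp < Vmax a b lm lp)
    (μdim μdip : MeasureTheory.Measure ℝ)
    (hdim : ∀ x y : ℝ, a < x → x ≤ y → y < b →
      μdim (Set.Ioc x y) = ENNReal.ofReal ((lm y)⁻¹ - (lm x)⁻¹))
    (hdip : ∀ x y : ℝ, a < x → x ≤ y → y < b →
      μdip (Set.Ioc x y) = ENNReal.ofReal ((lp x)⁻¹ - (lp y)⁻¹))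
    (V : ℝ) (hV1 : VWal a b lm lp < V) (hV2 : V ≤ Vmax a b lm lp)
    (Jm Jp : ℝ) (hJm : Jm = linvm a b lm V) (hJp : Jp = linvp a b lp V)
    (haJm : a < Jm) (hJmJp : Jm < Jp) (hJpb : Jp < b) :
    Phi a b lm lp V ≠ ⊤ ∧
    (VWal a b lm lp ^ 2)⁻¹ - (Phi a b lm lp V).toReal =
      (lm Jm * lm Jp)⁻¹ -
        (∫⁻ x in Set.Ioc Jm Jp, ENNReal.ofReal ((lp x)⁻¹) ∂μdim).toReal ∧
    (VWal a b lm lp ^ 2)⁻¹ - (Phi a b lm lp V).toReal =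
      (lp Jm * lp Jp)⁻¹ -
        (∫⁻ x in Set.Ioc Jm Jp, ENNReal.ofReal ((lm x)⁻¹) ∂μdip).toReal := by
  obtain ⟨hlmc, hlpc, hlma, hlpm, hlm0, hlp0⟩ := hA3
  set VW := VWal a b lm lp with hVWdef
  obtain ⟨hlmJm, hlpJp, xs, hJmxs, hxsJp, hlmxs, hlpxs, hVWpos⟩ :=
    luckock_facts a b hab lm lp ⟨hlmc, hlpc, hlma, hlpm, hlm0, hlp0⟩ hA5 hA7 V hV1 hV2
      Jm Jp hJm hJp haJm hJmJp hJpb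
  have haxs : a < xs := lt_trans haJm hJmxs
  have hxsb : xs < b := lt_trans hxsJp hJpb
  have hVpos : 0 < V := lt_trans hVWpos hV1
  have hJmI : Jm ∈ Set.Icc a b := ⟨le_of_lt haJm, le_of_lt (lt_trans hJmJp hJpb)⟩
  have hJpI : Jp ∈ Set.Icc a b := ⟨le_of_lt (lt_trans haJm hJmJp), le_of_lt hJpb⟩
  have hxsI : xs ∈ Set.Icc a b := ⟨le_of_lt haxs, le_of_lt hxsb⟩
  have hlmJp_pos : 0 < lm Jp := (hA5 Jp ⟨lt_trans haJm hJmJp, hJpb⟩).1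
  have hlpJm_pos : 0 < lp Jm := (hA5 Jm ⟨haJm, lt_trans hJmJp hJpb⟩).2
  have hVla : V ≤ lm a := le_trans hV2 (min_le_left _ _)
  have hVlb : V ≤ lp b := le_trans hV2 (min_le_right _ _)
  -- clamped versions of lm and lp
  set cl : ℝ → ℝ := fun x => max a (min x b) with hcl
  have hclcont : Continuous cl := by
    rw [hcl]; fun_prop
  have hclmono : Monotone cl :=
    fun x y h => max_le_max (le_refl a) (min_le_min h (le_refl b))
  have hclmem : ∀ x, cl x ∈ Set.Icc a b :=
    fun x => ⟨le_max_left _ _, max_le (le_of_lt hab) (min_le_right _ _)⟩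
  have hclid : ∀ x ∈ Set.Icc a b, cl x = x := by
    intro x hx
    rw [hcl]
    simp only []
    rw [min_eq_left hx.2, max_eq_right hx.1]
  set LM : ℝ → ℝ := fun x => lm (cl x) with hLM
  set LP : ℝ → ℝ := fun x => lp (cl x) with hLP
  have hLMc : Continuous LM := hlmc.comp_continuous hclcont hclmem
  have hLPc : Continuous LP := hlpc.comp_continuous hclcont hclmem
  have hLMa : Antitone LM := fun x y h => hlma (hclmem x) (hclmem y) (hclmono h)
  have hLPm : Monotone LP := fun x y h => hlpm (hclmem x) (hclmem y) (hclmono h)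
  have hLMeq : ∀ x ∈ Set.Icc a b, LM x = lm x := by
    intro x hx; rw [hLM]; simp only []; rw [hclid x hx]
  have hLPeq : ∀ x ∈ Set.Icc a b, LP x = lp x := by
    intro x hx; rw [hLP]; simp only []; rw [hclid x hx]
  have hLMJm : LM Jm = V := by rw [hLMeq Jm hJmI, hlmJm]
  have hLMxs : LM xs = VW := by rw [hLMeq xs hxsI, hlmxs]
  have hLPxs : LP xs = VW := by rw [hLPeq xs hxsI, hlpxs]
  have hLPJp : LP Jp = V := by rw [hLPeq Jp hJpI, hlpJp]
  -- atoms of μdim vanish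
  have hatom_dim : ∀ y : ℝ, a < y → y < b → μdim {y} = 0 := by
    intro y h1 h2
    refine atomzero h1 h2 (fun x => (lm x)⁻¹) ?_ μdim hdim
    exact ((hlmc.mono Set.Ioo_subset_Icc_self) y ⟨h1, h2⟩).inv₀
      (ne_of_gt (hA5 y ⟨h1, h2⟩).1)
  -- membership of the generalized inverses
  have hlinvmI : ∀ W, W ≤ V → linvm a b lm W ∈ Set.Icc a b := by
    intro W hW
    have hane : a ∈ {x | x ∈ Set.Icc a b ∧ W ≤ lm x} :=
      ⟨⟨le_refl a, le_of_lt hab⟩, le_trans hW hVla⟩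
    constructor
    · exact le_csSup ⟨b, fun x hx => hx.1.2⟩ hane
    · exact csSup_le ⟨a, hane⟩ (fun x hx => hx.1.2)
  have hlinvpI : ∀ W, W ≤ V → linvp a b lp W ∈ Set.Icc a b := by
    intro W hW
    have hbne : b ∈ {x | x ∈ Set.Icc a b ∧ W ≤ lp x} :=
      ⟨⟨le_of_lt hab, le_refl b⟩, le_trans hW hVlb⟩
    constructor
    · exact le_csInf ⟨b, hbne⟩ (fun x hx => hx.1.1)
    · exact csInf_le ⟨a, fun x hx => hx.1.1⟩ hbne
  -- ***** the lp-side change of variables *****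
  have hdipLP : ∀ x y : ℝ, a < x → x ≤ y → y < b →
      μdip (Set.Ioc x y) = ENNReal.ofReal ((LP x)⁻¹ - (LP y)⁻¹) := by
    intro x y h1 h2 h3
    rw [hLPeq x ⟨le_of_lt h1, le_of_lt (lt_of_le_of_lt h2 h3)⟩,
      hLPeq y ⟨le_of_lt (lt_of_lt_of_le h1 h2), le_of_lt h3⟩]
    exact hdip x y h1 h2 h3
  have hLMposJp : ∀ y ∈ Set.Icc a Jp, 0 < LM y := by
    intro y hy
    have hyI : y ∈ Set.Icc a b := ⟨hy.1, le_trans hy.2 hJpI.2⟩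
    rw [hLMeq y hyI]
    calc (0:ℝ) < lm Jp := hlmJp_pos
      _ ≤ lm y := hlma hyI hJpI hy.2
  have hgmB : MonotoneOn (fun x => (LM x)⁻¹) (Set.Icc a Jp) := by
    intro x hx y hy hxy
    exact inv_anti₀ (hLMposJp y hy) (hLMa hxy)
  have hdB : sInf {x | x ∈ Set.Icc a b ∧ LP Jp ≤ LP x} = Jp := by
    have hseteq : {x | x ∈ Set.Icc a b ∧ LP Jp ≤ LP x}
        = {x | x ∈ Set.Icc a b ∧ V ≤ lp x} := by
      ext x
      simp only [Set.mem_setOf_eq, and_congr_right_iff]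
      intro hx
      rw [hLPeq x hx, hLPJp]
    rw [hseteq, ← linvp, ← hJp]
  have hcovB := cov (a := a) (b := b) (c := xs) (d := Jp) LP (fun x => (LM x)⁻¹) μdip
    haxs hxsJp hJpb hLPc hLPm hgmB
    (fun x hx => inv_nonneg.2 (le_of_lt (hLMposJp x hx)))
    (by rw [hLPxs]; exact hVWpos) (by rw [hLPxs, hLPJp]; exact hV1) hdipLP hdB
  rw [hLPxs, hLPJp] at hcovB
  set Q2 := ∫⁻ x in Set.Ioc xs Jp, ENNReal.ofReal ((lm x)⁻¹) ∂μdip with hQ2def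
  have hrhsB : (∫⁻ x in Set.Ioc xs Jp, ENNReal.ofReal ((LM x)⁻¹) ∂μdip) = Q2 := by
    rw [hQ2def]
    refine setLIntegral_congr_fun measurableSet_Ioc ?_
    intro x hx
    beta_reduce
    rw [hLMeq x ⟨le_of_lt (lt_trans haxs hx.1), le_trans hx.2 hJpI.2⟩]
  have hB : (∫⁻ W in Set.Ioc VW V,
      ENNReal.ofReal ((lm (linvp a b lp W))⁻¹ * (W ^ 2)⁻¹)) = Q2 := by
    rw [← hrhsB, ← hcovB]
    refine setLIntegral_congr_fun measurableSet_Ioc ?_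
    intro W hW
    beta_reduce
    have hseteq : {x | x ∈ Set.Icc a b ∧ W ≤ LP x}
        = {x | x ∈ Set.Icc a b ∧ W ≤ lp x} := by
      ext x
      simp only [Set.mem_setOf_eq, and_congr_right_iff]
      intro hx
      rw [hLPeq x hx]
    rw [hseteq]
    have h1 : sInf {x | x ∈ Set.Icc a b ∧ W ≤ lp x} = linvp a b lp W := rfl
    rw [h1]
    simp only [hLMeq _ (hlinvpI W hW.2)]
  -- ***** the lm-side change of variables (by reflection) *****
  have hdimneg : ∀ x y : ℝ, -b < x → x ≤ y → y < -a →
      (μdim.map Neg.neg) (Set.Ioc x y) = ENNReal.ofReal ((LM (-x))⁻¹ - (LM (-y))⁻¹) := by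
    intro x y h1 h2 h3
    rw [Measure.map_apply measurable_neg measurableSet_Ioc]
    have hpre : Neg.neg ⁻¹' (Set.Ioc x y) = Set.Ico (-y) (-x) := by
      ext z
      simp only [Set.mem_preimage, Set.mem_Ioc, Set.mem_Ico]
      constructor
      · rintro ⟨u1, u2⟩; constructor <;> linarith
      · rintro ⟨u1, u2⟩; constructor <;> linarith
    rw [hpre, Ico_Ioc_measure (hatom_dim _ (by linarith) (by linarith))
        (hatom_dim _ (by linarith) (by linarith)),
      hdim (-y) (-x) (by linarith) (by linarith) (by linarith),
      hLMeq (-x) ⟨by linarith, by linarith⟩, hLMeq (-y) ⟨by linarith, by linarith⟩]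
  have hnegset : ∀ W : ℝ, W ≤ V →
      sInf {y | y ∈ Set.Icc (-b) (-a) ∧ W ≤ LM (-y)} = -(linvm a b lm W) := by
    intro W hW
    have h1 : {y | y ∈ Set.Icc (-b) (-a) ∧ W ≤ LM (-y)}
        = -{x | x ∈ Set.Icc a b ∧ W ≤ lm x} := by
      ext y
      simp only [Set.mem_setOf_eq, Set.mem_neg, Set.mem_Icc]
      constructor
      · rintro ⟨⟨u1, u2⟩, u3⟩
        have hyI : -y ∈ Set.Icc a b := ⟨by linarith, by linarith⟩
        exact ⟨hyI, by rwa [hLMeq _ hyI] at u3⟩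
      · rintro ⟨hyI, u3⟩
        refine ⟨⟨by linarith [hyI.2], by linarith [hyI.1]⟩, ?_⟩
        rwa [hLMeq _ hyI]
    rw [h1, Real.sInf_def, neg_neg]
    rfl
  have hLPposJm : ∀ y ∈ Set.Icc Jm b, 0 < LP y := by
    intro y hy
    have hyI : y ∈ Set.Icc a b := ⟨le_trans hJmI.1 hy.1, hy.2⟩
    rw [hLPeq y hyI]
    calc (0:ℝ) < lp Jm := hlpJm_pos
      _ ≤ lp y := hlpm hJmI hyI hy.1
  have hgmA : MonotoneOn (fun y => (LP (-y))⁻¹) (Set.Icc (-b) (-Jm)) := by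
    intro x hx y hy hxy
    have h1 : -y ∈ Set.Icc Jm b := ⟨by linarith [hy.2], by linarith [hy.1]⟩
    exact inv_anti₀ (hLPposJm _ h1) (hLPm (by linarith : -y ≤ -x))
  have hdA : sInf {x | x ∈ Set.Icc (-b) (-a) ∧ LM (- -Jm) ≤ LM (-x)} = -Jm := by
    have h0 : LM (- -Jm) = V := by rw [neg_neg, hLMJm]
    rw [h0, hnegset V (le_refl V), ← hJm]
  have hcovA := cov (a := -b) (b := -a) (c := -xs) (d := -Jm)
    (fun y => LM (-y)) (fun y => (LP (-y))⁻¹) (μdim.map Neg.neg)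
    (by linarith) (by linarith) (by linarith)
    (hLMc.comp continuous_neg) (fun x y h => hLMa (neg_le_neg h)) hgmA
    (fun x hx => inv_nonneg.2 (le_of_lt (hLPposJm _ ⟨by linarith [hx.2], by linarith [hx.1]⟩)))
    (by show (0:ℝ) < LM (- -xs); rw [neg_neg, hLMxs]; exact hVWpos)
    (by show LM (- -xs) < LM (- -Jm); rw [neg_neg, neg_neg, hLMxs, hLMJm]; exact hV1)
    hdimneg hdA
  simp only [neg_neg, hLMxs, hLMJm] at hcovA
  set P1 := ∫⁻ x in Set.Ioc Jm xs, ENNReal.ofReal ((lp x)⁻¹) ∂μdim with hP1def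
  have hmeasH : Measurable fun y : ℝ => ENNReal.ofReal ((LP (-y))⁻¹) :=
    ENNReal.measurable_ofReal.comp ((hLPc.comp continuous_neg).measurable.inv)
  have hrhsA : (∫⁻ y in Set.Ioc (-xs) (-Jm),
      ENNReal.ofReal ((LP (-y))⁻¹) ∂(μdim.map Neg.neg)) = P1 := by
    rw [setLIntegral_map measurableSet_Ioc hmeasH measurable_neg]
    have hpre : Neg.neg ⁻¹' (Set.Ioc (-xs) (-Jm)) = Set.Ico Jm xs := by
      ext z
      simp only [Set.mem_preimage, Set.mem_Ioc, Set.mem_Ico]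
      constructor
      · rintro ⟨u1, u2⟩; constructor <;> linarith
      · rintro ⟨u1, u2⟩; constructor <;> linarith
    rw [hpre]
    have hres : μdim.restrict (Set.Ico Jm xs) = μdim.restrict (Set.Ioc Jm xs) := by
      apply Measure.restrict_congr_set
      rw [MeasureTheory.ae_eq_set]
      constructor
      · refine measure_mono_null ?_ (hatom_dim Jm haJm (lt_trans hJmxs hxsb))
        intro z hz
        simp only [Set.mem_diff, Set.mem_Ico, Set.mem_Ioc, not_and, not_le,
          Set.mem_singleton_iff] at hz ⊢
        rcases lt_or_eq_of_le hz.1.1 with h | h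
        · exfalso; exact absurd (hz.2 h) (not_lt.2 (le_of_lt hz.1.2))
        · exact h.symm
      · refine measure_mono_null ?_ (hatom_dim xs haxs hxsb)
        intro z hz
        simp only [Set.mem_diff, Set.mem_Ioc, Set.mem_Ico, not_and, not_lt,
          Set.mem_singleton_iff] at hz ⊢
        rcases lt_or_eq_of_le hz.1.2 with h | h
        · exfalso; exact absurd (hz.2 (le_of_lt hz.1.1)) (not_le.2 h)
        · exact h
    rw [hres, hP1def]
    refine setLIntegral_congr_fun measurableSet_Ioc ?_
    intro x hx
    beta_reduce
    rw [neg_neg, hLPeq x ⟨le_of_lt (lt_trans haJm hx.1), le_trans hx.2 (le_of_lt hxsb)⟩]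
  have hA : (∫⁻ W in Set.Ioc VW V,
      ENNReal.ofReal ((lp (linvm a b lm W))⁻¹ * (W ^ 2)⁻¹)) = P1 := by
    rw [← hrhsA, ← hcovA]
    refine setLIntegral_congr_fun measurableSet_Ioc ?_
    intro W hW
    beta_reduce
    rw [hnegset W hW.2, neg_neg, hLPeq _ (hlinvmI W hW.2)]
  -- ***** splitting Phi *****
  have hmeasf1 : AEMeasurable
      (fun W => ENNReal.ofReal ((lp (linvm a b lm W))⁻¹ * (W ^ 2)⁻¹))
      (volume.restrict (Set.Ioc VW V)) := by
    set j : ℝ → ℝ := fun W => sSup {x | x ∈ Set.Icc a b ∧ min W V ≤ lm x} with hj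
    have hjne : ∀ W : ℝ, a ∈ {x | x ∈ Set.Icc a b ∧ min W V ≤ lm x} :=
      fun W => ⟨⟨le_refl a, le_of_lt hab⟩, le_trans (min_le_right _ _) hVla⟩
    have hjanti : Antitone j := by
      intro W1 W2 h12
      exact csSup_le_csSup ⟨b, fun x hx => hx.1.2⟩ ⟨a, hjne W2⟩
        (fun x hx => ⟨hx.1, le_trans (min_le_min h12 (le_refl V)) hx.2⟩)
    have hjmem : ∀ W, j W ∈ Set.Icc a b := fun W =>
      ⟨le_csSup ⟨b, fun x hx => hx.1.2⟩ (hjne W),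
       csSup_le ⟨a, hjne W⟩ (fun x hx => hx.1.2)⟩
    have hanti : Antitone fun W => LP (j W) := fun x y h => hLPm (hjanti h)
    refine AEMeasurable.congr
      (f := fun W => ENNReal.ofReal ((LP (j W))⁻¹) * ENNReal.ofReal ((W ^ 2)⁻¹)) ?_ ?_
    · exact ((ENNReal.measurable_ofReal.comp hanti.measurable.inv).mul
        (ENNReal.measurable_ofReal.comp (by fun_prop : Measurable fun W : ℝ => ((W ^ 2)⁻¹)))).aemeasurable
    · refine (ae_restrict_iff' measurableSet_Ioc).2 (Filter.Eventually.of_forall ?_)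
      intro W hW
      have h1 : min W V = W := min_eq_left hW.2
      have h2 : j W = linvm a b lm W := by rw [hj]; simp only [h1]; rfl
      show ENNReal.ofReal ((LP (j W))⁻¹) * ENNReal.ofReal ((W ^ 2)⁻¹)
        = ENNReal.ofReal ((lp (linvm a b lm W))⁻¹ * (W ^ 2)⁻¹)
      rw [h2, hLPeq _ (hlinvmI W hW.2), ← ENNReal.ofReal_mul
        (inv_nonneg.2 (hlp0 _ (hlinvmI W hW.2)))]
  have hPhi : Phi a b lm lp V = P1 + Q2 := by
    rw [← hA, ← hB]
    rw [Phi, ← hVWdef, ← lintegral_add_left' hmeasf1]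
    refine setLIntegral_congr_fun measurableSet_Ioc ?_
    intro W hW
    beta_reduce
    rw [add_mul, ENNReal.ofReal_add
      (mul_nonneg (inv_nonneg.2 (hlp0 _ (hlinvmI W hW.2))) (by positivity))
      (mul_nonneg (inv_nonneg.2 (hlm0 _ (hlinvpI W hW.2))) (by positivity))]
  -- ***** integration by parts *****
  have hsub1 : Set.Icc Jm xs ⊆ Set.Icc a b :=
    fun x hx => ⟨le_trans hJmI.1 hx.1, le_trans hx.2 hxsI.2⟩
  have hsub2 : Set.Icc xs Jp ⊆ Set.Icc a b :=
    fun x hx => ⟨le_trans hxsI.1 hx.1, le_trans hx.2 hJpI.2⟩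
  obtain ⟨hP1fin, hQ1fin, he1⟩ := ibp (a := a) (b := b) (s := Jm) (t := xs) lm lp μdim μdip
    haJm hJmxs hxsb hdim hdip (hlma.mono hsub1) (hlpm.mono hsub1)
    (by rw [hlmxs]; exact hVWpos) hlpJm_pos
    (fun y hy => hatom_dim y (lt_trans haJm hy.1) (lt_of_le_of_lt hy.2 hxsb))
  obtain ⟨hP2fin, hQ2fin, he2⟩ := ibp (a := a) (b := b) (s := xs) (t := Jp) lm lp μdim μdip
    haxs hxsJp hJpb hdim hdip (hlma.mono hsub2) (hlpm.mono hsub2)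
    hlmJp_pos (by rw [hlpxs]; exact hVWpos)
    (fun y hy => hatom_dim y (lt_trans haxs hy.1) (lt_of_le_of_lt hy.2 hJpb))
  -- split the statement integrals
  have hsplit1 : (∫⁻ x in Set.Ioc Jm Jp, ENNReal.ofReal ((lp x)⁻¹) ∂μdim)
      = P1 + ∫⁻ x in Set.Ioc xs Jp, ENNReal.ofReal ((lp x)⁻¹) ∂μdim := by
    rw [hP1def, ← Set.Ioc_union_Ioc_eq_Ioc (le_of_lt hJmxs) (le_of_lt hxsJp),
      lintegral_union measurableSet_Ioc (Set.Ioc_disjoint_Ioc_of_le le_rfl)]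
  have hsplit2 : (∫⁻ x in Set.Ioc Jm Jp, ENNReal.ofReal ((lm x)⁻¹) ∂μdip)
      = (∫⁻ x in Set.Ioc Jm xs, ENNReal.ofReal ((lm x)⁻¹) ∂μdip) + Q2 := by
    rw [hQ2def, ← Set.Ioc_union_Ioc_eq_Ioc (le_of_lt hJmxs) (le_of_lt hxsJp),
      lintegral_union measurableSet_Ioc (Set.Ioc_disjoint_Ioc_of_le le_rfl)]
  -- ***** conclusion *****
  have hPhifin : Phi a b lm lp V ≠ ⊤ := by
    rw [hPhi]
    exact ENNReal.add_ne_top.2 ⟨hP1fin, hQ2fin⟩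
  refine ⟨hPhifin, ?_, ?_⟩
  · rw [hPhi, hsplit1, ENNReal.toReal_add hP1fin hQ2fin,
      ENNReal.toReal_add hP1fin hP2fin]
    have hVW2 : (VW ^ 2)⁻¹ = VW⁻¹ * VW⁻¹ := by rw [sq, mul_inv]
    have hmm : (lm Jm * lm Jp)⁻¹ = V⁻¹ * (lm Jp)⁻¹ := by rw [mul_inv, hlmJm]
    rw [hVW2, hmm]
    rw [hlpJp, hlmxs, hlpxs] at he2
    linarith
  · rw [hPhi, hsplit2, ENNReal.toReal_add hP1fin hQ2fin,
      ENNReal.toReal_add hQ1fin hQ2fin]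
    have hVW2 : (VW ^ 2)⁻¹ = VW⁻¹ * VW⁻¹ := by rw [sq, mul_inv]
    have hpp : (lp Jm * lp Jp)⁻¹ = (lp Jm)⁻¹ * V⁻¹ := by rw [mul_inv, hlpJp]
    rw [hVW2, hpp]
    rw [hlmJm, hlmxs, hlpxs] at he1
    linarith
end
end

section
/- Consider the uniform Stigler–Luckock model with Ī = [0,1], λ₋(x) = 1 − x and λ₊(x) = x. Then V_W = 1/2, Φ(V) = 4 − 2(V⁻¹ + log(V⁻¹ − 1)) for all V ∈ (1/2, 1), and there is a unique z ∈ (0,∞) with e^{−z} − z + 1 = 0; this z satisfies z > 1, and V_L = 1/z, so that the competitive window is J^c = (1 − 1/z, 1/z), i.e. 1 − J^c₋ = J^c₊ = V_L. -/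
open MeasureTheory Set
open scoped ENNReal

noncomputable section

-- basic facts about the unique root z
lemma fstrict : StrictAnti (fun z : ℝ => Real.exp (-z) - z + 1) := by
  intro a b hab
  simp only
  have : Real.exp (-b) < Real.exp (-a) := Real.exp_lt_exp.2 (by linarith)
  linarith

lemma zexists : ∃ z : ℝ, z ∈ Set.Icc (1:ℝ) 2 ∧ Real.exp (-z) - z + 1 = 0 := by
  have hc : ContinuousOn (fun z : ℝ => Real.exp (-z) - z + 1) (Set.Icc 1 2) := by
    fun_prop
  have h1 : (0:ℝ) ∈ Set.Icc (Real.exp (-2) - 2 + 1) (Real.exp (-1) - 1 + 1) := by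
    constructor
    · have : Real.exp (-2) < 1 := Real.exp_lt_one_iff.2 (by norm_num)
      linarith
    · have := Real.exp_pos (-1)
      linarith
  have := intermediate_value_Icc' (by norm_num : (1:ℝ) ≤ 2) hc h1
  obtain ⟨z, hz1, hz2⟩ := this
  exact ⟨z, hz1, hz2⟩

lemma zfacts {z : ℝ} (hz : 0 < z) (he : Real.exp (-z) - z + 1 = 0) :
    1 < z ∧ z < 2 ∧ Real.log (z - 1) = -z := by
  have hexp : Real.exp (-z) = z - 1 := by linarith
  have h1 : 1 < z := by have := Real.exp_pos (-z); linarith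
  have h2 : z < 2 := by
    by_contra h
    push_neg at h
    have : Real.exp (-z) ≤ Real.exp (-2) := Real.exp_le_exp.2 (by linarith)
    have : Real.exp (-2) < 1 := Real.exp_lt_one_iff.2 (by norm_num)
    linarith
  refine ⟨h1, h2, ?_⟩
  rw [← hexp, Real.log_exp]

lemma VWal_eq : VWal 0 1 (fun x => 1 - x) (fun x => x) = 1 / 2 := by
  unfold VWal
  apply le_antisymm
  · apply Real.sSup_le
    · rintro y ⟨x, hx, rfl⟩
      simp only
      rcases le_total x (1/2) with h | h
      · exact le_trans (min_le_right _ _) h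
      · exact le_trans (min_le_left _ _) (by linarith)
    · norm_num
  · apply le_csSup
    · refine ⟨1/2, ?_⟩
      rintro y ⟨x, hx, rfl⟩
      simp only
      rcases le_total x (1/2) with h | h
      · exact le_trans (min_le_right _ _) h
      · exact le_trans (min_le_left _ _) (by linarith)
    · exact ⟨1/2, by norm_num, by norm_num⟩

lemma linvm_eq {W : ℝ} (hW : W ∈ Set.Icc (0:ℝ) 1) :
    linvm 0 1 (fun x => 1 - x) W = 1 - W := by
  unfold linvm
  have : {x | x ∈ Set.Icc (0:ℝ) 1 ∧ W ≤ 1 - x} = Set.Icc 0 (1 - W) := by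
    ext x
    simp only [Set.mem_setOf_eq, Set.mem_Icc]
    constructor
    · rintro ⟨⟨h1, h2⟩, h3⟩; exact ⟨h1, by linarith⟩
    · rintro ⟨h1, h2⟩; exact ⟨⟨h1, by linarith [hW.1]⟩, by linarith⟩
  rw [this, csSup_Icc (by linarith [hW.2])]

lemma linvp_eq {W : ℝ} (hW : W ∈ Set.Icc (0:ℝ) 1) :
    linvp 0 1 (fun x => x) W = W := by
  unfold linvp
  have : {x | x ∈ Set.Icc (0:ℝ) 1 ∧ W ≤ x} = Set.Icc W 1 := by
    ext x
    simp only [Set.mem_setOf_eq, Set.mem_Icc]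
    constructor
    · rintro ⟨⟨h1, h2⟩, h3⟩; exact ⟨h3, h2⟩
    · rintro ⟨h1, h2⟩; exact ⟨⟨by linarith [hW.1], h2⟩, h1⟩
  rw [this, csInf_Icc hW.2]

lemma deriv_aux {x : ℝ} (hx0 : 0 < x) (hx1 : x < 1) :
    HasDerivAt (fun W : ℝ => -2 * (W⁻¹ + Real.log (W⁻¹ - 1)))
      (((1 - x)⁻¹ + (1 - x)⁻¹) * (x ^ 2)⁻¹) x := by
  have hxne : x ≠ 0 := ne_of_gt hx0
  have hinv : HasDerivAt (fun W : ℝ => W⁻¹) (-(x^2)⁻¹) x := hasDerivAt_inv hxne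
  have hin : HasDerivAt (fun W : ℝ => W⁻¹ - 1) (-(x^2)⁻¹) x := hinv.sub_const 1
  have hne : x⁻¹ - 1 ≠ 0 := by
    have : 1 < x⁻¹ := one_lt_inv₀ hx0 |>.mpr hx1
    linarith
  have hlog : HasDerivAt (fun W : ℝ => Real.log (W⁻¹ - 1)) (-(x^2)⁻¹ / (x⁻¹ - 1)) x :=
    hin.log hne
  have := (hinv.add hlog).const_mul (-2 : ℝ)
  convert this using 1
  case e'_4 => rfl
  case e'_5 => rfl
  case e'_8 => rfl
  have h1 : (1:ℝ) - x ≠ 0 := by linarith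
  rw [show x⁻¹ - 1 = (1 - x) / x by rw [sub_div, div_self hxne, one_div]]
  field_simp
  ring

lemma Phi_eq {V : ℝ} (hV : V ∈ Set.Ioo (1/2 : ℝ) 1) :
    Phi 0 1 (fun x => 1 - x) (fun x => x) V =
      ENNReal.ofReal (4 - 2 * (V⁻¹ + Real.log (V⁻¹ - 1))) := by
  obtain ⟨hV1, hV2⟩ := hV
  set f : ℝ → ℝ := fun W => ((1 - W)⁻¹ + (1 - W)⁻¹) * (W ^ 2)⁻¹ with hf
  have hstep1 : Phi 0 1 (fun x => 1 - x) (fun x => x) V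
      = ∫⁻ W in Set.Ioc (1/2 : ℝ) V, ENNReal.ofReal (f W) := by
    unfold Phi
    rw [VWal_eq]
    apply setLIntegral_congr_fun measurableSet_Ioc
    intro W hW
    have hW0 : W ∈ Set.Icc (0:ℝ) 1 := ⟨by linarith [hW.1], le_trans hW.2 hV2.le⟩
    beta_reduce
    rw [linvm_eq hW0, linvp_eq hW0]
  rw [hstep1]
  -- continuity of f on [1/2, V]
  have hcont : ContinuousOn f (Set.Icc (1/2 : ℝ) V) := by
    apply ContinuousOn.mul
    · apply ContinuousOn.add <;>
      · apply ContinuousOn.inv₀ (by fun_prop)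
        intro x hx
        simp only [Set.mem_Icc] at hx
        have : x < 1 := lt_of_le_of_lt hx.2 hV2
        intro h; linarith [h]
    · apply ContinuousOn.inv₀ (by fun_prop)
      intro x hx
      simp only [Set.mem_Icc] at hx
      have : (0:ℝ) < x := by linarith [hx.1]
      positivity
  have hint : IntegrableOn f (Set.Ioc (1/2 : ℝ) V) := by
    exact (hcont.integrableOn_Icc).mono_set Set.Ioc_subset_Icc_self
  have hnn : 0 ≤ᵐ[volume.restrict (Set.Ioc (1/2 : ℝ) V)] f := by
    rw [Filter.EventuallyLE, ae_restrict_iff' measurableSet_Ioc]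
    apply ae_of_all
    intro x hx
    have hx1 : (1/2 : ℝ) < x := hx.1
    have hx2 : x ≤ V := hx.2
    have h1 : (0:ℝ) < 1 - x := by linarith
    have h2 : (0:ℝ) < x := by linarith
    positivity
  rw [← MeasureTheory.ofReal_integral_eq_lintegral_ofReal hint hnn]
  congr 1
  rw [← intervalIntegral.integral_of_le (by linarith : (1/2:ℝ) ≤ V)]
  have hFTC := intervalIntegral.integral_eq_sub_of_hasDerivAt
      (f := fun W : ℝ => -2 * (W⁻¹ + Real.log (W⁻¹ - 1))) (f' := f) (a := 1/2) (b := V)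
      (fun x hx => by
        rw [Set.uIcc_of_le (by linarith : (1/2:ℝ) ≤ V)] at hx
        exact deriv_aux (by linarith [hx.1]) (lt_of_le_of_lt hx.2 hV2))
      (by
        apply ContinuousOn.intervalIntegrable
        rwa [Set.uIcc_of_le (by linarith : (1/2:ℝ) ≤ V)])
  rw [hFTC]
  norm_num
  ring

lemma Vmax_eq : Vmax 0 1 (fun x => 1 - x) (fun x => x) = 1 := by
  unfold Vmax; norm_num

lemma lintegral_mono_set' {f : ℝ → ℝ≥0∞} {s t : Set ℝ}
    (h : s ⊆ t) : ∫⁻ x in s, f x ≤ ∫⁻ x in t, f x :=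
  lintegral_mono_set h

lemma VLuc_eq {z : ℝ} (hz1 : 1 < z) (hz2 : z < 2) (hlog : Real.log (z - 1) = -z)
    (hexp : Real.exp (-z) = z - 1) :
    VLuc 0 1 (fun x => 1 - x) (fun x => x) = 1 / z := by
  have hz0 : (0:ℝ) < z := by linarith
  have hiz1 : 1 / z < 1 := by rw [div_lt_one hz0]; exact hz1
  have hiz2 : (1:ℝ)/2 < 1 / z := by
    rw [div_lt_div_iff₀ (by norm_num) hz0]; linarith
  unfold VLuc
  rw [VWal_eq, Vmax_eq]
  have h4 : ENNReal.ofReal ((((1:ℝ)/2)^2)⁻¹) = ENNReal.ofReal 4 := by norm_num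
  rw [h4]
  -- membership of 1/z
  have hmem : (1/z : ℝ) ∈ {V : ℝ | V ∈ Set.Icc (1/2 : ℝ) 1 ∧
      Phi 0 1 (fun x => 1 - x) (fun x => x) V ≤ ENNReal.ofReal 4} := by
    refine ⟨⟨le_of_lt hiz2, le_of_lt hiz1⟩, ?_⟩
    rw [Phi_eq ⟨hiz2, hiz1⟩]
    have hinv : ((1:ℝ)/z)⁻¹ = z := by field_simp
    rw [hinv, hlog]
    norm_num
  -- upper bound
  have hub : ∀ V ∈ {V : ℝ | V ∈ Set.Icc (1/2 : ℝ) 1 ∧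
      Phi 0 1 (fun x => 1 - x) (fun x => x) V ≤ ENNReal.ofReal 4}, V ≤ 1 / z := by
    rintro V ⟨⟨hV1, hV2⟩, hPhi⟩
    rcases eq_or_lt_of_le hV2 with rfl | hV2'
    · -- V = 1 : contradiction
      exfalso
      set V₀ : ℝ := (1 + Real.exp (-3))⁻¹ with hV₀
      have he3 : Real.exp (-3 : ℝ) < 1 := Real.exp_lt_one_iff.2 (by norm_num)
      have he3' : (0:ℝ) < Real.exp (-3) := Real.exp_pos _
      have hV₀mem : V₀ ∈ Set.Ioo (1/2 : ℝ) 1 := by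
        have hpos : (0:ℝ) < 1 + Real.exp (-3) := by positivity
        constructor
        · have hmul : (1 + Real.exp (-3)) * (1/2) < 1 := by linarith
          calc (1:ℝ)/2 = (1+Real.exp (-3))⁻¹ * ((1+Real.exp (-3)) * (1/2)) := by field_simp
            _ < (1+Real.exp (-3))⁻¹ * 1 := mul_lt_mul_of_pos_left hmul (by positivity)
            _ = V₀ := by rw [hV₀]; ring
        · rw [hV₀, inv_lt_one_iff₀]
          right; linarith
      have hsub : Set.Ioc (1/2 : ℝ) V₀ ⊆ Set.Ioc (1/2 : ℝ) 1 :=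
        Set.Ioc_subset_Ioc le_rfl hV₀mem.2.le
      have hmono : Phi 0 1 (fun x => 1 - x) (fun x => x) V₀ ≤
          Phi 0 1 (fun x => 1 - x) (fun x => x) 1 := by
        unfold Phi
        rw [VWal_eq]
        exact lintegral_mono_set hsub
      rw [Phi_eq hV₀mem] at hmono
      have hV₀inv : V₀⁻¹ = 1 + Real.exp (-3) := by rw [hV₀, inv_inv]
      rw [hV₀inv] at hmono
      have hlog3 : Real.log (1 + Real.exp (-3) - 1) = -3 := by
        rw [show (1:ℝ) + Real.exp (-3) - 1 = Real.exp (-3) by ring, Real.log_exp]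
      rw [hlog3] at hmono
      have := le_trans hmono hPhi
      rw [ENNReal.ofReal_le_ofReal_iff (by norm_num)] at this
      linarith
    · rcases le_or_gt V (1/2) with h | h
      · linarith
      · rw [Phi_eq ⟨h, hV2'⟩] at hPhi
        rw [ENNReal.ofReal_le_ofReal_iff (by norm_num)] at hPhi
        have hh : 0 ≤ V⁻¹ + Real.log (V⁻¹ - 1) := by linarith
        by_contra hlt
        push_neg at hlt
        have hV0 : (0:ℝ) < V := by linarith
        have hVinv : V⁻¹ < z := by
          have h1 : (1:ℝ) < V * z := by
            rw [div_lt_iff₀ hz0] at hlt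
            linarith
          calc V⁻¹ = V⁻¹ * 1 := by ring
            _ < V⁻¹ * (V * z) := mul_lt_mul_of_pos_left h1 (by positivity)
            _ = z := by field_simp
        have hu1 : 1 < V⁻¹ := one_lt_inv₀ hV0 |>.mpr hV2'
        have hexpu : Real.exp (-V⁻¹) ≤ V⁻¹ - 1 := by
          have : -V⁻¹ ≤ Real.log (V⁻¹ - 1) := by linarith
          calc Real.exp (-V⁻¹) ≤ Real.exp (Real.log (V⁻¹ - 1)) := Real.exp_le_exp.2 this
            _ = V⁻¹ - 1 := Real.exp_log (by linarith)
        have hstr := fstrict hVinv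
        simp only at hstr
        linarith
  apply le_antisymm
  · exact csSup_le ⟨1/z, hmem⟩ hub
  · exact le_csSup ⟨1/z, hub⟩ hmem

/-- the uniform model: for the uniform Stigler-Luckock model on
`[0,1]` with `λ₋(x) = 1 − x` and `λ₊(x) = x`, one has `V_W = 1/2`,
`Φ(V) = 4 − 2(V⁻¹ + log(V⁻¹ − 1))` for `V ∈ (1/2, 1)`, there is a unique `z > 0` with
`e^{−z} − z + 1 = 0`; it satisfies `z > 1`, `V_L = 1/z`, and the competitive window is
`J^c = (1 − 1/z, 1/z)`, i.e. `1 − J^c₋ = J^c₊ = V_L`. -/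
theorem stmt16 :
    VWal 0 1 (fun x => 1 - x) (fun x => x) = 1 / 2 ∧
    (∀ V ∈ Set.Ioo (1 / 2 : ℝ) 1,
      Phi 0 1 (fun x => 1 - x) (fun x => x) V =
        ENNReal.ofReal (4 - 2 * (V⁻¹ + Real.log (V⁻¹ - 1)))) ∧
    (∃! z : ℝ, 0 < z ∧ Real.exp (-z) - z + 1 = 0) ∧
    ∀ z : ℝ, 0 < z → Real.exp (-z) - z + 1 = 0 →
      1 < z ∧
      VLuc 0 1 (fun x => 1 - x) (fun x => x) = 1 / z ∧
      linvm 0 1 (fun x => 1 - x) (VLuc 0 1 (fun x => 1 - x) (fun x => x)) = 1 - 1 / z ∧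
      linvp 0 1 (fun x => x) (VLuc 0 1 (fun x => 1 - x) (fun x => x)) = 1 / z := by
  refine ⟨VWal_eq, fun V hV => Phi_eq hV, ?_, ?_⟩
  · obtain ⟨z, hz, he⟩ := zexists
    refine ⟨z, ⟨by linarith [hz.1], he⟩, ?_⟩
    rintro y ⟨hy0, hye⟩
    exact fstrict.injective (by rw [hye, he])
  · intro z hz he
    obtain ⟨h1, h2, hlog⟩ := zfacts hz he
    have hexp : Real.exp (-z) = z - 1 := by linarith
    have hVL := VLuc_eq h1 h2 hlog hexp
    have hmem : (1/z : ℝ) ∈ Set.Icc (0:ℝ) 1 :=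
      ⟨by positivity, by rw [div_le_one (by linarith)]; linarith⟩
    refine ⟨h1, hVL, ?_, ?_⟩
    · rw [hVL]; exact linvm_eq hmem
    · rw [hVL]; exact linvp_eq hmem
end
end
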